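/- Let a be a positive integer, let c_1, c_2, c_3 be odd integers, and set A = {0, 2^a c_1, c_2, c_2 + 2^a c_3} and 𝒯 = {0, 2, 4, …, 2^a − 2}. Then A ⊕ 𝒯 is a complete set of representatives modulo 2^{a+1}: the map A × 𝒯 → ℤ/2^{a+1}ℤ, (α, t) ↦ α + t mod 2^{a+1}, is a bijection. Moreover, the set {m ∈ ℤ : m ≡ α' − α (mod 2^{a+1}) for some α ≠ α' in A} equals {2^a(2m+1) : m ∈ ℤ} ∪ {2^a m + c_2 : m ∈ ℤ} ∪ {2^a m − c_2 : m ∈ ℤ}. -/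
import Mathlib


open scoped BigOperators

private lemma sandwich (Q s m m' : ℤ) (hQ : 0 < Q) (h0 : 0 ≤ m) (h1 : m < Q)
    (h0' : 0 ≤ m') (h1' : m' < Q) (h : 2*m - 2*m' = 2*Q*s) : s = 0 ∧ m = m' := by
  have hs : s = 0 := by
    rcases lt_trichotomy s 0 with hs|hs|hs
    · have h2 : Q * 1 ≤ Q * (-s) := mul_le_mul_of_nonneg_left (by omega) (le_of_lt hQ)
      nlinarith
    · exact hs
    · have h2 : Q * 1 ≤ Q * s := mul_le_mul_of_nonneg_left (by omega) (le_of_lt hQ)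
      nlinarith
  subst hs
  exact ⟨rfl, by linarith⟩

private lemma sandwich_odd (Q s m m' c : ℤ) (hQ : 0 < Q) (h0 : 0 ≤ m) (h1 : m < Q)
    (h0' : 0 ≤ m') (h1' : m' < Q) (hc : Odd c) (h : 2*m - 2*m' = 2*Q*(c + 2*s)) : False := by
  obtain ⟨hz, -⟩ := sandwich Q (c + 2*s) m m' hQ h0 h1 h0' h1' h
  obtain ⟨e, he⟩ := hc
  omega

private lemma key_inj (b : ℕ) (d₁ d₂ d₃ : ℤ) (m m' : ℕ) (hm : m < 2^b) (hm' : m' < 2^b)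
    (α α' : ℤ)
    (hα : α = 0 ∨ α = 2^(b+1)*(2*d₁+1) ∨ α = 2*d₂+1 ∨ α = 2*d₂+1+2^(b+1)*(2*d₃+1))
    (hα' : α' = 0 ∨ α' = 2^(b+1)*(2*d₁+1) ∨ α' = 2*d₂+1 ∨ α' = 2*d₂+1+2^(b+1)*(2*d₃+1))
    (hdvd : ((2:ℤ)^(b+1+1)) ∣ (α + 2*m) - (α' + 2*m')) : α = α' ∧ m = m' := by
  have hQ : (0:ℤ) < 2^b := by positivity
  have hmz : (m:ℤ) < 2^b := by exact_mod_cast hm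
  have hm'z : (m':ℤ) < 2^b := by exact_mod_cast hm'
  have hm0 : (0:ℤ) ≤ (m:ℤ) := Int.natCast_nonneg m
  have hm0' : (0:ℤ) ≤ (m':ℤ) := Int.natCast_nonneg m'
  obtain ⟨k, hk⟩ := hdvd
  have diag : 2*(m:ℤ) - 2*(m':ℤ) = 2*2^b*(2*k) → α = α ∧ m = m' := by
    intro h
    refine ⟨rfl, ?_⟩
    have := (sandwich (2^b) (2*k) (m:ℤ) (m':ℤ) hQ hm0 hmz hm0' hm'z h).2
    exact_mod_cast this
  rcases hα with rfl|rfl|rfl|rfl <;> rcases hα' with rfl|rfl|rfl|rfl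
  -- (0,0)
  · exact diag (by linear_combination hk)
  -- (0,X₁)
  · exact (sandwich_odd (2^b) k (m:ℤ) (m':ℤ) (2*d₁+1) hQ hm0 hmz hm0' hm'z ⟨d₁, by ring⟩
      (by linear_combination hk)).elim
  -- (0,Y)
  · exfalso
    obtain ⟨e, he⟩ : ∃ e : ℤ, 2*e = 1 :=
      ⟨(m:ℤ) - m' - d₂ - 2*2^b*k, by linear_combination hk⟩
    omega
  -- (0,Y+X₃)
  · exfalso
    obtain ⟨e, he⟩ : ∃ e : ℤ, 2*e = 1 :=
      ⟨(m:ℤ) - m' - d₂ - 2^b*(2*d₃+1) - 2*2^b*k, by linear_combination hk⟩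
    omega
  -- (X₁,0)
  · exact (sandwich_odd (2^b) k (m:ℤ) (m':ℤ) (-(2*d₁+1)) hQ hm0 hmz hm0' hm'z ⟨-(d₁+1), by ring⟩
      (by linear_combination hk)).elim
  -- (X₁,X₁)
  · exact diag (by linear_combination hk)
  -- (X₁,Y)
  · exfalso
    obtain ⟨e, he⟩ : ∃ e : ℤ, 2*e = 1 :=
      ⟨2^b*(2*d₁+1) + (m:ℤ) - m' - d₂ - 2*2^b*k, by linear_combination hk⟩
    omega
  -- (X₁,Y+X₃)
  · exfalso
    obtain ⟨e, he⟩ : ∃ e : ℤ, 2*e = 1 :=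
      ⟨2^b*(2*d₁+1) + (m:ℤ) - m' - d₂ - 2^b*(2*d₃+1) - 2*2^b*k, by linear_combination hk⟩
    omega
  -- (Y,0)
  · exfalso
    obtain ⟨e, he⟩ : ∃ e : ℤ, 2*e = 1 :=
      ⟨-d₂ - (m:ℤ) + m' + 2*2^b*k, by linear_combination -hk⟩
    omega
  -- (Y,X₁)
  · exfalso
    obtain ⟨e, he⟩ : ∃ e : ℤ, 2*e = 1 :=
      ⟨-d₂ - (m:ℤ) + m' + 2^b*(2*d₁+1) + 2*2^b*k, by linear_combination -hk⟩
    omega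
  -- (Y,Y)
  · exact diag (by linear_combination hk)
  -- (Y,Y+X₃)
  · exact (sandwich_odd (2^b) k (m:ℤ) (m':ℤ) (2*d₃+1) hQ hm0 hmz hm0' hm'z ⟨d₃, by ring⟩
      (by linear_combination hk)).elim
  -- (Y+X₃,0)
  · exfalso
    obtain ⟨e, he⟩ : ∃ e : ℤ, 2*e = 1 :=
      ⟨-d₂ - 2^b*(2*d₃+1) - (m:ℤ) + m' + 2*2^b*k, by linear_combination -hk⟩
    omega
  -- (Y+X₃,X₁)
  · exfalso
    obtain ⟨e, he⟩ : ∃ e : ℤ, 2*e = 1 :=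
      ⟨-d₂ - 2^b*(2*d₃+1) + 2^b*(2*d₁+1) - (m:ℤ) + m' + 2*2^b*k, by linear_combination -hk⟩
    omega
  -- (Y+X₃,Y)
  · exact (sandwich_odd (2^b) k (m:ℤ) (m':ℤ) (-(2*d₃+1)) hQ hm0 hmz hm0' hm'z ⟨-(d₃+1), by ring⟩
      (by linear_combination hk)).elim
  -- (Y+X₃,Y+X₃)
  · exact diag (by linear_combination hk)

/-- for `a ≥ 1` and odd integers `c₁, c₂, c₃`, the set
`A = {0, 2^a c₁, c₂, c₂ + 2^a c₃}` together with `𝒯 = {0, 2, 4, …, 2^a − 2}` satisfies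
`A ⊕ 𝒯 = ℤ_{2^{a+1}}` (every residue modulo `2^{a+1}` is `α + t` for exactly one pair), and
`{m : m ≡ α' − α (mod 2^{a+1}) for some α ≠ α' in A}`
`= {2^a(2m+1) : m ∈ ℤ} ∪ {2^a m + c₂ : m ∈ ℤ} ∪ {2^a m − c₂ : m ∈ ℤ}`. -/
theorem tiling_for_size_four (a : ℕ) (ha : 1 ≤ a) (c₁ c₂ c₃ : ℤ)
    (hc₁ : Odd c₁) (hc₂ : Odd c₂) (hc₃ : Odd c₃)
    (A : Finset ℤ) (hA : A = ({0, 2 ^ a * c₁, c₂, c₂ + 2 ^ a * c₃} : Finset ℤ))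
    (T : Finset ℤ) (hT : T = (Finset.range (2 ^ (a - 1))).image (fun m : ℕ => (2 * m : ℤ))) :
    (∀ z : ZMod (2 ^ (a + 1)), ∃! p : ℤ × ℤ,
      p.1 ∈ A ∧ p.2 ∈ T ∧ ((p.1 + p.2 : ℤ) : ZMod (2 ^ (a + 1))) = z) ∧
    {m : ℤ | ∃ α ∈ A, ∃ α' ∈ A, α ≠ α' ∧ m ≡ α' - α [ZMOD (2 ^ (a + 1) : ℤ)]} =
      {m : ℤ | ∃ k : ℤ, m = 2 ^ a * (2 * k + 1)} ∪
      {m : ℤ | ∃ k : ℤ, m = 2 ^ a * k + c₂} ∪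
      {m : ℤ | ∃ k : ℤ, m = 2 ^ a * k - c₂} := by
  classical
  obtain ⟨b, rfl⟩ : ∃ b, a = b + 1 := ⟨a - 1, by omega⟩
  obtain ⟨d₁, hd₁⟩ := hc₁
  obtain ⟨d₂, hd₂⟩ := hc₂
  obtain ⟨d₃, hd₃⟩ := hc₃
  subst hd₁ hd₂ hd₃
  simp only [Nat.add_sub_cancel] at hT
  -- auxiliary facts
  obtain ⟨u, hu, hu0⟩ : ∃ u : ℤ, 2^(b+1)*(2*d₁+1) = 2*u ∧ u ≠ 0 :=
    ⟨2^b*(2*d₁+1), by ring, mul_ne_zero (by positivity) (by omega)⟩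
  obtain ⟨w, hw, hw0⟩ : ∃ w : ℤ, 2^(b+1)*(2*d₃+1) = 2*w ∧ w ≠ 0 :=
    ⟨2^b*(2*d₃+1), by ring, mul_ne_zero (by positivity) (by omega)⟩
  have hmemA : ∀ x : ℤ, x ∈ A ↔
      (x = 0 ∨ x = 2^(b+1)*(2*d₁+1) ∨ x = 2*d₂+1 ∨ x = 2*d₂+1+2^(b+1)*(2*d₃+1)) := by
    intro x
    rw [hA]
    simp [Finset.mem_insert]
  have hmemT : ∀ t : ℤ, t ∈ T ↔ ∃ m : ℕ, m < 2^b ∧ t = 2*(m:ℤ) := by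
    intro t
    rw [hT]
    simp only [Finset.mem_image, Finset.mem_range]
    constructor
    · rintro ⟨m, hm, rfl⟩; exact ⟨m, hm, rfl⟩
    · rintro ⟨m, hm, rfl⟩; exact ⟨m, hm, rfl⟩
  have hAcard : A.card = 4 := by
    rw [hA, hu, hw]
    rw [Finset.card_insert_of_notMem (by simp; omega),
        Finset.card_insert_of_notMem (by simp; omega),
        Finset.card_insert_of_notMem (by simp; omega),
        Finset.card_singleton]
  have hTcard : T.card = 2^b := by
    rw [hT, Finset.card_image_of_injective _ (fun x y h => by omega), Finset.card_range]
  haveI : NeZero (2^(b+1+1)) := ⟨by positivity⟩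
  set f : ℤ × ℤ → ZMod (2^(b+1+1)) := fun p => ((p.1 + p.2 : ℤ) : ZMod (2^(b+1+1))) with hf
  have hinj : Set.InjOn f ↑(A ×ˢ T) := by
    intro p hp q hq hfeq
    simp only [Finset.coe_product, Set.mem_prod, Finset.mem_coe] at hp hq
    obtain ⟨m, hm, hpm⟩ := (hmemT p.2).1 hp.2
    obtain ⟨m', hm', hqm⟩ := (hmemT q.2).1 hq.2
    have hmod : (p.1 + p.2) ≡ (q.1 + q.2) [ZMOD ((2^(b+1+1) : ℕ) : ℤ)] :=
      (ZMod.intCast_eq_intCast_iff _ _ _).1 hfeq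
    have hdvd : ((2:ℤ)^(b+1+1)) ∣ (q.1 + 2*(m':ℤ)) - (p.1 + 2*(m:ℤ)) := by
      have h2 := hmod.dvd
      push_cast at h2
      rw [hpm, hqm] at h2
      exact h2
    obtain ⟨h1, h2⟩ := key_inj b d₁ d₂ d₃ m' m hm' hm q.1 p.1
      ((hmemA q.1).1 hq.1) ((hmemA p.1).1 hp.1) hdvd
    have : p.2 = q.2 := by rw [hpm, hqm, h2]
    exact Prod.ext h1.symm this
  have hcard : (A ×ˢ T).card = Fintype.card (ZMod (2^(b+1+1))) := by
    rw [Finset.card_product, hAcard, hTcard, ZMod.card]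
    rw [pow_succ, pow_succ]
    ring
  have himg : (A ×ˢ T).image f = Finset.univ :=
    Finset.eq_univ_of_card _ (by rw [Finset.card_image_of_injOn hinj, hcard])
  constructor
  · intro z
    have hz : z ∈ (A ×ˢ T).image f := himg ▸ Finset.mem_univ z
    obtain ⟨p, hp, hpz⟩ := Finset.mem_image.1 hz
    obtain ⟨hp1, hp2⟩ := Finset.mem_product.1 hp
    refine ⟨p, ⟨hp1, hp2, hpz⟩, ?_⟩
    rintro q ⟨hq1, hq2, hqz⟩
    exact hinj (Finset.mem_coe.2 (Finset.mem_product.2 ⟨hq1, hq2⟩)) (Finset.mem_coe.2 hp)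
      (hqz.trans hpz.symm)
  · ext m
    simp only [Set.mem_setOf_eq, Set.mem_union]
    constructor
    · rintro ⟨α, hα, α', hα', hne, hmod⟩
      rw [hmemA] at hα hα'
      obtain ⟨k, hk⟩ := hmod.dvd
      rcases hα with rfl|rfl|rfl|rfl <;> rcases hα' with rfl|rfl|rfl|rfl
      · exact absurd rfl hne
      · exact Or.inl (Or.inl ⟨d₁ - k, by linear_combination -hk⟩)
      · exact Or.inl (Or.inr ⟨-2*k, by linear_combination -hk⟩)
      · exact Or.inl (Or.inr ⟨2*d₃+1-2*k, by linear_combination -hk⟩)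
      · exact Or.inl (Or.inl ⟨-d₁-1-k, by linear_combination -hk⟩)
      · exact absurd rfl hne
      · exact Or.inl (Or.inr ⟨-(2*d₁+1)-2*k, by linear_combination -hk⟩)
      · exact Or.inl (Or.inr ⟨2*d₃-2*d₁-2*k, by linear_combination -hk⟩)
      · exact Or.inr ⟨-2*k, by linear_combination -hk⟩
      · exact Or.inr ⟨2*d₁+1-2*k, by linear_combination -hk⟩
      · exact absurd rfl hne
      · exact Or.inl (Or.inl ⟨d₃ - k, by linear_combination -hk⟩)
      · exact Or.inr ⟨-(2*d₃+1)-2*k, by linear_combination -hk⟩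
      · exact Or.inr ⟨2*d₁-2*d₃-2*k, by linear_combination -hk⟩
      · exact Or.inl (Or.inl ⟨-d₃-1-k, by linear_combination -hk⟩)
      · exact absurd rfl hne
    · rintro ((⟨k, rfl⟩ | ⟨k, rfl⟩) | ⟨k, rfl⟩)
      · refine ⟨0, (hmemA 0).2 (Or.inl rfl), 2^(b+1)*(2*d₁+1),
          (hmemA _).2 (Or.inr (Or.inl rfl)), fun h => ?_, ?_⟩
        · omega
        · exact Int.modEq_iff_dvd.mpr ⟨d₁ - k, by ring⟩
      · rcases Int.even_or_odd k with ⟨j, rfl⟩ | ⟨j, rfl⟩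
        · refine ⟨0, (hmemA 0).2 (Or.inl rfl), 2*d₂+1,
            (hmemA _).2 (Or.inr (Or.inr (Or.inl rfl))), fun h => by omega, ?_⟩
          exact Int.modEq_iff_dvd.mpr ⟨-j, by ring⟩
        · refine ⟨0, (hmemA 0).2 (Or.inl rfl), 2*d₂+1+2^(b+1)*(2*d₃+1),
            (hmemA _).2 (Or.inr (Or.inr (Or.inr rfl))), fun h => by omega, ?_⟩
          exact Int.modEq_iff_dvd.mpr ⟨d₃ - j, by ring⟩
      · rcases Int.even_or_odd k with ⟨j, rfl⟩ | ⟨j, rfl⟩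
        · refine ⟨2*d₂+1, (hmemA _).2 (Or.inr (Or.inr (Or.inl rfl))), 0,
            (hmemA 0).2 (Or.inl rfl), fun h => by omega, ?_⟩
          exact Int.modEq_iff_dvd.mpr ⟨-j, by ring⟩
        · refine ⟨2*d₂+1+2^(b+1)*(2*d₃+1), (hmemA _).2 (Or.inr (Or.inr (Or.inr rfl))), 0,
            (hmemA 0).2 (Or.inl rfl), fun h => by omega, ?_⟩
          exact Int.modEq_iff_dvd.mpr ⟨-(d₃+j+1), by ring⟩
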